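/- Assume k ≥ 1 and that the matrix G[0] has full row rank k over GF(q). Then for every message x with codeword y there exists a message x̃ ≠ x with codeword ỹ such that ỹ ≠ y and the set { d ∈ ℤ : ỹ[d] ≠ y[d] } has at most ν elements. -/

import Mathlib

open Finset

/-- A message of the convolutional code: `x[d] = 0` for `d < 0` and `d ≥ N`. -/
def IsMsg {K : Type*} [Zero K] (k N : ℕ) (x : ℤ → Fin k → K) : Prop :=
  ∀ d : ℤ, d < 0 ∨ (N : ℤ) ≤ d → x d = 0

/-- The codeword of a message: `y[d] = ∑_{l=0}^{ν-1} x[d-l] · G[l]`. -/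
def cw {K : Type*} [Field K] (k n ν : ℕ) (G : ℕ → Matrix (Fin k) (Fin n) K)
    (x : ℤ → Fin k → K) (d : ℤ) : Fin n → K :=
  ∑ l ∈ Finset.range ν, Matrix.vecMul (x (d - l)) (G l)

lemma rows_li {K : Type*} [Field K] {k n : ℕ} {A : Matrix (Fin k) (Fin n) K}
    (hA : A.rank = k) : LinearIndependent K (fun i ↦ A i) := by
  rw [A.rank_eq_finrank_span_row] at hA
  rw [linearIndependent_iff_card_eq_finrank_span]
  simp only [Set.finrank, Fintype.card_fin]; exact hA.symm

/-- Appendix B claim: if `G[0]` has full row rank, then for every message `x`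
with codeword `y` there is a different message `x̃` whose codeword `ỹ` differs
from `y` in at most `ν` time indices (and `ỹ ≠ y`). -/
theorem stmt_5 {K : Type*} [Field K] [Fintype K] [DecidableEq K]
    (k n ν N : ℕ) (hk : 1 ≤ k) (hn : 1 ≤ n) (hν : 1 ≤ ν) (hN : 1 ≤ N)
    (G : ℕ → Matrix (Fin k) (Fin n) K)
    (hG0 : (G 0).rank = k) :
    ∀ x : ℤ → Fin k → K, IsMsg k N x →
      ∃ xt : ℤ → Fin k → K, IsMsg k N xt ∧ xt ≠ x ∧
        cw k n ν G xt ≠ cw k n ν G x ∧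
        {d : ℤ | cw k n ν G xt d ≠ cw k n ν G x d}.Finite ∧
        {d : ℤ | cw k n ν G xt d ≠ cw k n ν G x d}.ncard ≤ ν := by
  intro x hx
  -- nonzero perturbation vector
  set e : Fin k → K := fun _ => 1 with he
  have he0 : e ≠ 0 := by
    intro h
    have : (1 : K) = 0 := congrFun h ⟨0, hk⟩
    exact one_ne_zero this
  -- perturbed message
  set xt : ℤ → Fin k → K := fun d => if d = 0 then x 0 + e else x d with hxt
  have hmsg : IsMsg k N xt := by
    intro d hd
    have hd0 : d ≠ 0 := by
      rcases hd with h | h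
      · omega
      · omega
    simp only [hxt, if_neg hd0]
    exact hx d hd
  -- value of the codeword difference
  have hdiff : ∀ d : ℤ, cw k n ν G xt d - cw k n ν G x d =
      ∑ l ∈ Finset.range ν, (if d - (l : ℤ) = 0 then Matrix.vecMul e (G l) else 0) := by
    intro d
    unfold cw
    rw [← Finset.sum_sub_distrib]
    refine Finset.sum_congr rfl fun l _ => ?_
    by_cases h : d - (l : ℤ) = 0
    · simp [hxt, h, Matrix.add_vecMul]
    · simp [hxt, h]
  have hdz : ∀ d : ℤ, (d < 0 ∨ (ν : ℤ) ≤ d) → cw k n ν G xt d = cw k n ν G x d := by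
    intro d hd
    have : cw k n ν G xt d - cw k n ν G x d = 0 := by
      rw [hdiff d]
      refine Finset.sum_eq_zero fun l hl => ?_
      have hl' : (l : ℤ) < ν := by exact_mod_cast Finset.mem_range.mp hl
      have : d - (l : ℤ) ≠ 0 := by omega
      simp [this]
    exact sub_eq_zero.mp this
  have hne0 : cw k n ν G xt 0 ≠ cw k n ν G x 0 := by
    have h0 : cw k n ν G xt 0 - cw k n ν G x 0 = Matrix.vecMul e (G 0) := by
      rw [hdiff 0]
      rw [Finset.sum_eq_single 0]
      · simp
      · intro l hl hl0
        have hl0' : (l : ℤ) ≠ 0 := by exact_mod_cast hl0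
        have : (0 : ℤ) - (l : ℤ) ≠ 0 := by omega
        rw [if_neg this]
      · intro h; exact absurd (Finset.mem_range.mpr hν) h
    intro h
    rw [h, sub_self] at h0
    have hinj := Matrix.vecMul_injective_iff.mpr (rows_li hG0)
    apply he0
    apply hinj
    show Matrix.vecMul e (G 0) = Matrix.vecMul 0 (G 0)
    rw [Matrix.zero_vecMul, ← h0]
  have hsub : {d : ℤ | cw k n ν G xt d ≠ cw k n ν G x d} ⊆
      ↑((Finset.range ν).image (Nat.cast : ℕ → ℤ)) := by
    intro d hd
    simp only [Set.mem_setOf_eq] at hd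
    by_contra hmem
    apply hd
    apply hdz
    by_contra hcon
    push_neg at hcon
    obtain ⟨h1, h2⟩ := hcon
    apply hmem
    simp only [Finset.coe_image, Set.mem_image, Finset.mem_coe, Finset.mem_range]
    exact ⟨d.toNat, by omega, by omega⟩
  have hfin : {d : ℤ | cw k n ν G xt d ≠ cw k n ν G x d}.Finite :=
    Set.Finite.subset (Finset.finite_toSet _) hsub
  refine ⟨xt, hmsg, ?_, ?_, hfin, ?_⟩
  · intro h
    have := congrFun h 0
    simp only [hxt, if_pos rfl] at this
    have : e = 0 := by
      have := congrArg (· - x 0) this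
      simpa using this
    exact he0 this
  · intro h
    exact hne0 (congrFun h 0)
  · calc {d : ℤ | cw k n ν G xt d ≠ cw k n ν G x d}.ncard
        ≤ ((Finset.range ν).image (Nat.cast : ℕ → ℤ)).card := by
          rw [← Set.ncard_coe_finset]
          exact Set.ncard_le_ncard hsub (Finset.finite_toSet _)
      _ ≤ ν := (Finset.card_image_le).trans (by rw [Finset.card_range])
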